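/- Suppose d̃ : ℝ → ℝ^{Ñ₁} and b : ℝ → ℝ^{N₁} are differentiable and solve the spatially discretized one-dimensional vacuum Maxwell equations d̃'(t) = c D̃ h̃(t) and b'(t) = −c D e(t), where e(t) = M₀⁻¹ M₀₁ d̃(t) and h̃(t) = M̃₀⁻¹ M̃₀₁ b(t) are the discrete constitutive relations. Then the discrete energy H(t) = (1/8π)[(M₀₁ d̃(t))ᵀ M₀⁻¹ (M₀₁ d̃(t)) + (M̃₀₁ b(t))ᵀ M̃₀⁻¹ (M̃₀₁ b(t))] is constant in time; i.e., the spatially discretized Hamiltonian system exactly conserves the discrete Hamiltonian. -/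

import Mathlib

open Matrix

private lemma hasDerivAt_mulVec' {n m : ℕ} (A : Matrix (Fin m) (Fin n) ℝ)
    {u : ℝ → Fin n → ℝ} {u' : Fin n → ℝ} {t : ℝ} (h : HasDerivAt u u' t) :
    HasDerivAt (fun s => A.mulVec (u s)) (A.mulVec u') t := by
  rw [hasDerivAt_pi] at h ⊢
  intro i
  simp only [Matrix.mulVec, dotProduct]
  exact HasDerivAt.fun_sum fun j _ => (h j).const_mul (A i j)

private lemma hasDerivAt_dot' {n : ℕ} {u v : ℝ → Fin n → ℝ} {u' v' : Fin n → ℝ} {t : ℝ}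
    (hu : HasDerivAt u u' t) (hv : HasDerivAt v v' t) :
    HasDerivAt (fun s => u s ⬝ᵥ v s) (u' ⬝ᵥ v t + u t ⬝ᵥ v') t := by
  simp only [dotProduct]
  rw [← Finset.sum_add_distrib]
  exact HasDerivAt.fun_sum fun i _ =>
    ((hasDerivAt_pi.1 hu i).mul (hasDerivAt_pi.1 hv i))

private lemma dot_symm' {n : ℕ} {S : Matrix (Fin n) (Fin n) ℝ} (hS : Sᵀ = S)
    (u w : Fin n → ℝ) : u ⬝ᵥ S.mulVec w = S.mulVec u ⬝ᵥ w := by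
  rw [Matrix.dotProduct_mulVec]
  congr 1
  rw [← hS, Matrix.vecMul_transpose, hS]

/-- The spatially discretized 1D vacuum Maxwell equations
`d̃' = c D̃ h̃`, `b' = −c D e` with discrete constitutive relations
`e = M₀⁻¹ M₀₁ d̃`, `h̃ = M̃₀⁻¹ M̃₀₁ b` exactly conserve the discrete energy
`H = (1/8π)[(M₀₁ d̃)ᵀ M₀⁻¹ (M₀₁ d̃) + (M̃₀₁ b)ᵀ M̃₀⁻¹ (M̃₀₁ b)]`. -/
theorem discrete_maxwell_energy_conservation
    {N₀ N₁ Nt₀ Nt₁ : ℕ}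
    (M₀ : Matrix (Fin N₀) (Fin N₀) ℝ) (Mt₀ : Matrix (Fin Nt₀) (Fin Nt₀) ℝ)
    (hM₀sym : M₀.IsSymm) (hMt₀sym : Mt₀.IsSymm)
    (hM₀ : IsUnit M₀) (hMt₀ : IsUnit Mt₀)
    (M₀₁ : Matrix (Fin N₀) (Fin Nt₁) ℝ) (Mt₀₁ : Matrix (Fin Nt₀) (Fin N₁) ℝ)
    (D : Matrix (Fin N₁) (Fin N₀) ℝ) (Dt : Matrix (Fin Nt₁) (Fin Nt₀) ℝ)
    (hibp : (M₀₁ * Dt).transpose = Mt₀₁ * D)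
    (c : ℝ)
    (dt : ℝ → (Fin Nt₁ → ℝ)) (b : ℝ → (Fin N₁ → ℝ))
    (e : ℝ → (Fin N₀ → ℝ)) (ht : ℝ → (Fin Nt₀ → ℝ))
    (he : ∀ t, e t = M₀⁻¹.mulVec (M₀₁.mulVec (dt t)))
    (hht : ∀ t, ht t = Mt₀⁻¹.mulVec (Mt₀₁.mulVec (b t)))
    (hdt : ∀ t, HasDerivAt dt (c • Dt.mulVec (ht t)) t)
    (hb : ∀ t, HasDerivAt b (-(c • D.mulVec (e t))) t) :
    ∀ t₁ t₂ : ℝ,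
      (1 / (8 * Real.pi)) *
          ((M₀₁.mulVec (dt t₁)) ⬝ᵥ (M₀⁻¹.mulVec (M₀₁.mulVec (dt t₁))) +
            (Mt₀₁.mulVec (b t₁)) ⬝ᵥ (Mt₀⁻¹.mulVec (Mt₀₁.mulVec (b t₁)))) =
        (1 / (8 * Real.pi)) *
          ((M₀₁.mulVec (dt t₂)) ⬝ᵥ (M₀⁻¹.mulVec (M₀₁.mulVec (dt t₂))) +
            (Mt₀₁.mulVec (b t₂)) ⬝ᵥ (Mt₀⁻¹.mulVec (Mt₀₁.mulVec (b t₂)))) := by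
  have hM₀inv : (M₀⁻¹)ᵀ = M₀⁻¹ := by
    rw [Matrix.transpose_nonsing_inv, hM₀sym.eq]
  have hMt₀inv : (Mt₀⁻¹)ᵀ = Mt₀⁻¹ := by
    rw [Matrix.transpose_nonsing_inv, hMt₀sym.eq]
  set F : ℝ → ℝ := fun t =>
      (M₀₁.mulVec (dt t)) ⬝ᵥ (M₀⁻¹.mulVec (M₀₁.mulVec (dt t))) +
        (Mt₀₁.mulVec (b t)) ⬝ᵥ (Mt₀⁻¹.mulVec (Mt₀₁.mulVec (b t))) with hF
  have hderiv : ∀ t, HasDerivAt F 0 t := by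
    intro t
    have h1 : HasDerivAt (fun s => M₀₁.mulVec (dt s))
        (M₀₁.mulVec (c • Dt.mulVec (ht t))) t := hasDerivAt_mulVec' _ (hdt t)
    have h2 : HasDerivAt (fun s => M₀⁻¹.mulVec (M₀₁.mulVec (dt s)))
        (M₀⁻¹.mulVec (M₀₁.mulVec (c • Dt.mulVec (ht t)))) t :=
      hasDerivAt_mulVec' _ h1
    have h3 : HasDerivAt (fun s => Mt₀₁.mulVec (b s))
        (Mt₀₁.mulVec (-(c • D.mulVec (e t)))) t := hasDerivAt_mulVec' _ (hb t)
    have h4 : HasDerivAt (fun s => Mt₀⁻¹.mulVec (Mt₀₁.mulVec (b s)))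
        (Mt₀⁻¹.mulVec (Mt₀₁.mulVec (-(c • D.mulVec (e t))))) t :=
      hasDerivAt_mulVec' _ h3
    have hD := (hasDerivAt_dot' h1 h2).add (hasDerivAt_dot' h3 h4)
    have key : (M₀₁.mulVec (c • Dt.mulVec (ht t))) ⬝ᵥ (M₀⁻¹.mulVec (M₀₁.mulVec (dt t))) +
        (M₀₁.mulVec (dt t)) ⬝ᵥ (M₀⁻¹.mulVec (M₀₁.mulVec (c • Dt.mulVec (ht t)))) +
        ((Mt₀₁.mulVec (-(c • D.mulVec (e t)))) ⬝ᵥ (Mt₀⁻¹.mulVec (Mt₀₁.mulVec (b t))) +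
          (Mt₀₁.mulVec (b t)) ⬝ᵥ (Mt₀⁻¹.mulVec (Mt₀₁.mulVec (-(c • D.mulVec (e t)))))) = 0 := by
      rw [dot_symm' hM₀inv (M₀₁.mulVec (dt t)), dot_symm' hMt₀inv (Mt₀₁.mulVec (b t)),
        ← he t, ← hht t]
      rw [dotProduct_comm _ (M₀₁.mulVec (c • Dt.mulVec (ht t))),
        dotProduct_comm _ (Mt₀₁.mulVec (-(c • D.mulVec (e t))))]
      have e1 : (M₀₁.mulVec (c • Dt.mulVec (ht t))) ⬝ᵥ (e t) =
          c * (((Mt₀₁ * D).mulVec (e t)) ⬝ᵥ (ht t)) := by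
        rw [Matrix.mulVec_smul, smul_dotProduct, Matrix.mulVec_mulVec]
        congr 1
        rw [dotProduct_comm ((M₀₁ * Dt).mulVec (ht t)), Matrix.dotProduct_mulVec,
          ← hibp, ← Matrix.mulVec_transpose]
      have e2 : (Mt₀₁.mulVec (-(c • D.mulVec (e t)))) ⬝ᵥ (ht t) =
          -(c * (((Mt₀₁ * D).mulVec (e t)) ⬝ᵥ (ht t))) := by
        rw [Matrix.mulVec_neg, neg_dotProduct, Matrix.mulVec_smul,
          smul_dotProduct, Matrix.mulVec_mulVec]
        rfl
      rw [e1, e2]; ring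
    rw [hF]
    exact key ▸ hD
  have hconst := is_const_of_deriv_eq_zero (fun t => (hderiv t).differentiableAt)
    (fun t => (hderiv t).deriv)
  intro t₁ t₂
  have := hconst t₁ t₂
  simp only [hF] at this
  rw [this]
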